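/- For every w ∈ 𝔻, the function q_w(z) = (1-z)^{w/(1-w)} is an eigenvector of the adjoint Cesàro operator C* with eigenvalue 1-w, i.e., C* q_w = (1-w) q_w, where (C*f)(z) = (1/(1-z)) ∫_z^1 f(ξ) dξ. -/

import Mathlib

open Complex Metric

/-- The adjoint Cesàro operator, via
`(C*f)(z) = (1/(1-z)) ∫_z^1 f(ξ) dξ = ∫₀¹ f(z + t(1-z)) dt`
(integration along the segment from `z` to `1`). -/
noncomputable def cesaroStar (f : ℂ → ℂ) (z : ℂ) : ℂ :=
  ∫ t in (0:ℝ)..1, f (z + (t : ℂ) * (1 - z))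

/-- Splitting a power of a product with a nonnegative real factor. -/
lemma my_cpow_mul_ofReal_nonneg {x : ℂ} (hx : x ≠ 0) {r : ℝ} (hr : 0 ≤ r) (a : ℂ) :
    (x * (r : ℂ)) ^ a = x ^ a * (r : ℂ) ^ a := by
  rcases eq_or_lt_of_le hr with h | h
  · rcases eq_or_ne a 0 with rfl | ha
    · simp
    · simp [← h, Complex.zero_cpow ha]
  · have hr0 : (r : ℂ) ≠ 0 := by
      exact_mod_cast (ne_of_gt h)
    rw [Complex.cpow_def_of_ne_zero (mul_ne_zero hx hr0),
      Complex.cpow_def_of_ne_zero hx, Complex.cpow_def_of_ne_zero hr0,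
      Complex.log_mul_ofReal r h x hx, ← Complex.exp_add, ← Complex.ofReal_log hr]
    ring_nf
  
/-- For every `w ∈ 𝔻`, the function `q_w(z) = (1-z)^{w/(1-w)}` is an eigenvector of the
adjoint Cesàro operator with eigenvalue `1 - w`: `C* q_w = (1-w) q_w` on `𝔻`. -/
theorem cesaroStar_eigen_qw (w : ℂ) (hw : w ∈ ball (0 : ℂ) 1) :
    ∀ z ∈ ball (0 : ℂ) 1,
      cesaroStar (fun ξ => (1 - ξ) ^ (w / (1 - w))) z = (1 - w) * (1 - z) ^ (w / (1 - w)) := by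
  intro z hz
  rw [mem_ball, dist_zero_right] at hw hz
  have hw1 : (1 : ℂ) - w ≠ 0 := by
    intro h
    have : w = 1 := by linear_combination -h
    simp [this] at hw
  have hz1 : (1 : ℂ) - z ≠ 0 := by
    intro h
    have : z = 1 := by linear_combination -h
    simp [this] at hz
  set a : ℂ := w / (1 - w) with ha
  have ha1 : a + 1 = (1 - w)⁻¹ := by
    field_simp [ha]
    rw [ha, add_mul, div_mul_cancel₀ _ hw1]; ring
  have hre : (0:ℝ) < (a + 1).re := by
    rw [ha1, Complex.inv_re]
    apply div_pos
    · simp only [Complex.sub_re, Complex.one_re]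
      have h2 : ‖w‖ < 1 := hw
      have := Complex.re_le_norm w
      linarith
    · exact Complex.normSq_pos.mpr hw1
  have ha0 : a + 1 ≠ 0 := by
    intro h
    rw [h] at hre
    simp at hre
  have hrea : (-1 : ℝ) < a.re := by
    have : (a + 1).re = a.re + 1 := by simp
    linarith [hre, this ▸ hre]
  unfold cesaroStar
  have key : ∀ t ∈ Set.uIcc (0:ℝ) 1,
      (1 - (z + (t : ℂ) * (1 - z))) ^ a = (1 - z) ^ a * (((1 - t : ℝ) : ℂ)) ^ a := by
    intro t ht
    rw [Set.uIcc_of_le (by norm_num)] at ht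
    have h1 : 1 - (z + (t : ℂ) * (1 - z)) = (1 - z) * (((1 - t : ℝ)) : ℂ) := by
      push_cast; ring
    rw [h1, my_cpow_mul_ofReal_nonneg hz1 (by linarith [ht.2]) a]
  rw [intervalIntegral.integral_congr key, intervalIntegral.integral_const_mul]
  have hsub : (∫ t in (0:ℝ)..1, (((1 - t : ℝ)) : ℂ) ^ a) = ∫ t in (0:ℝ)..1, ((t : ℝ) : ℂ) ^ a := by
    simpa using intervalIntegral.integral_comp_sub_left (a := (0:ℝ)) (b := 1) (fun t : ℝ => ((t : ℝ) : ℂ) ^ a) 1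
  rw [hsub, integral_cpow (Or.inl hrea)]
  simp only [Complex.ofReal_one, Complex.ofReal_zero, Complex.one_cpow, Complex.zero_cpow ha0, ha1, Complex.zero_cpow (inv_ne_zero hw1)]
  field_simp
  ring
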